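/- The subspace sum graph G(V) is a complete graph (i.e., every pair of distinct vertices is adjacent) if and only if dim V = 2. -/

import Mathlib

open Module

/-- The subspace sum graph of a vector space `V` over a field `K`: vertices are the
nontrivial proper subspaces of `V`, and two distinct vertices are adjacent iff their
sum is all of `V`. -/
def subspaceSumGraph (K V : Type*) [Field K] [AddCommGroup V] [Module K V] :
    SimpleGraph {W : Submodule K V // W ≠ ⊥ ∧ W ≠ ⊤} where
  Adj W₁ W₂ := W₁ ≠ W₂ ∧ (W₁ : Submodule K V) ⊔ (W₂ : Submodule K V) = ⊤
  symm := by
    constructor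
    intro a b h
    exact ⟨h.1.symm, by rw [sup_comm]; exact h.2⟩
  loopless := by
    constructor
    intro a h
    exact h.1 rfl

/-- The subspace sum graph `G(V)` is complete (every pair of distinct vertices is
adjacent) if and only if `dim V = 2`. -/
theorem subspaceSumGraph_complete_iff (K V : Type*) [Field K] [AddCommGroup V] [Module K V]
    [FiniteDimensional K V] (hdim : 1 < finrank K V) :
    (∀ W₁ W₂ : {W : Submodule K V // W ≠ ⊥ ∧ W ≠ ⊤}, W₁ ≠ W₂ →
      (subspaceSumGraph K V).Adj W₁ W₂) ↔ finrank K V = 2 := by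
  constructor
  · intro hcomp
    by_contra hne
    have h3 : 3 ≤ finrank K V := by omega
    let b := finBasis K V
    let i0 : Fin (finrank K V) := ⟨0, by omega⟩
    let i1 : Fin (finrank K V) := ⟨1, by omega⟩
    have h0 : i0 ≠ i1 := by
      intro h
      have := congrArg Fin.val h
      simp [i0, i1] at this
    set W₁ : Submodule K V := Submodule.span K {b i0}
    set W₂ : Submodule K V := Submodule.span K {b i1}
    have hr1 : finrank K W₁ = 1 := finrank_span_singleton (b.ne_zero i0)
    have hr2 : finrank K W₂ = 1 := finrank_span_singleton (b.ne_zero i1)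
    have hnt1 : W₁ ≠ ⊥ := by
      intro h; rw [h] at hr1; simp [finrank_bot] at hr1
    have hnt2 : W₂ ≠ ⊥ := by
      intro h; rw [h] at hr2; simp [finrank_bot] at hr2
    have htop1 : W₁ ≠ ⊤ := by
      intro h; rw [h, finrank_top] at hr1; omega
    have htop2 : W₂ ≠ ⊤ := by
      intro h; rw [h, finrank_top] at hr2; omega
    have hne12 : W₁ ≠ W₂ := by
      intro h
      have hb0 : b i0 ∈ W₂ := h ▸ Submodule.mem_span_singleton_self _
      rw [Submodule.mem_span_singleton] at hb0
      obtain ⟨c, hc⟩ := hb0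
      have hnotmem := b.linearIndependent.notMem_span_image
        (s := ({i1} : Set (Fin (finrank K V)))) (x := i0) (by simpa using h0)
      rw [← hc] at hnotmem
      exact hnotmem (Submodule.smul_mem _ _ (Submodule.subset_span (by simp)))
    have hadj := hcomp ⟨W₁, hnt1, htop1⟩ ⟨W₂, hnt2, htop2⟩ (by
      simp only [ne_eq, Subtype.mk.injEq]; exact hne12)
    have hsup : W₁ ⊔ W₂ = ⊤ := hadj.2
    have hdimeq := Submodule.finrank_sup_add_finrank_inf_eq W₁ W₂
    rw [hsup, finrank_top] at hdimeq
    omega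
  · intro h2 W₁ W₂ hne
    refine ⟨hne, ?_⟩
    have hr1 : finrank K (W₁ : Submodule K V) = 1 := by
      have hlt := Submodule.finrank_lt (s := (W₁ : Submodule K V)) W₁.2.2
      have hpos : 0 < finrank K (W₁ : Submodule K V) :=
        Module.finrank_pos_iff.mpr (Submodule.nontrivial_iff_ne_bot.mpr W₁.2.1)
      omega
    have hr2 : finrank K (W₂ : Submodule K V) = 1 := by
      have hlt := Submodule.finrank_lt (s := (W₂ : Submodule K V)) W₂.2.2
      have hpos : 0 < finrank K (W₂ : Submodule K V) :=
        Module.finrank_pos_iff.mpr (Submodule.nontrivial_iff_ne_bot.mpr W₂.2.1)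
      omega
    have hlt : (W₁ : Submodule K V) < (W₁ : Submodule K V) ⊔ W₂ := by
      refine lt_of_le_of_ne le_sup_left ?_
      intro h
      have hle2 : (W₂ : Submodule K V) ≤ W₁ := h ▸ le_sup_right
      have : (W₂ : Submodule K V) = W₁ := Submodule.eq_of_le_of_finrank_le hle2 (by omega)
      exact hne (Subtype.ext this.symm)
    have h2le : 2 ≤ finrank K ↥((W₁ : Submodule K V) ⊔ W₂) := by
      have := Submodule.finrank_lt_finrank_of_lt hlt
      omega
    refine Submodule.eq_top_of_finrank_eq ?_
    have hle := Submodule.finrank_le ((W₁ : Submodule K V) ⊔ W₂)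
    omega
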